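/- The set T(n,q) = ∪_{0 ≠ v ∈ J(n,q)} {t·v : t ∈ F_q} satisfies |T(n,q)| ≤ (q−1)·(C(q+n−1, n) − (q−1)) + 1, and T(n,q) is an increasing Kakeya set. -/

import Mathlib

open Set

theorem stmt_17 {F : Type*} [Field F] [Fintype F] (n q : ℕ) (hn : 1 ≤ n)
    (hq : Fintype.card F = q) (i : Fin q → F) (hi : Function.Injective i) :
    let T : Set (Fin n → F) :=
      {x | ∃ v : Fin n → Fin q, Monotone v ∧ (fun j => i (v j)) ≠ (0 : Fin n → F) ∧
        ∃ t : F, x = t • fun j => i (v j)}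
    Nat.card T ≤ (q - 1) * ((q + n - 1).choose n - (q - 1)) + 1 ∧
    (∀ v : Fin n → Fin q, Monotone v → (fun j => i (v j)) ≠ (0 : Fin n → F) →
      ∃ a : Fin n → F, ∀ t : F, (a + t • fun j => i (v j)) ∈ T) := by
  intro T
  have hq1 : 1 ≤ q := hq ▸ Fintype.card_pos
  refine ⟨?_, fun v hv hne => ⟨0, fun t => by
    show ∃ v', _
    exact ⟨v, hv, hne, t, by simp⟩⟩⟩
  set C := (q + n - 1).choose n with hC
  set j0 : Fin n := ⟨0, hn⟩ with hj0
  -- the set of constant tuples over F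
  set Cst : Set (Fin n → F) := Set.range (fun c : F => Function.const (Fin n) c) with hCst
  have hB : Cst.ncard = q := by
    rw [hCst, ← Nat.card_coe_set_eq,
      Nat.card_range_of_injective (fun a b h => congrFun h j0), Nat.card_eq_fintype_card, hq]
  -- monotone tuples over Fin q
  set MonoS : Set (Fin n → Fin q) := {v | Monotone v} with hMonoS
  have hMono_le : MonoS.ncard ≤ C := by
    rw [← Nat.card_coe_set_eq]
    have hinj : Function.Injective
        (fun v : ↥MonoS => (⟨(List.ofFn v.1 : Multiset (Fin q)), by simp⟩ : Sym (Fin q) n)) := by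
      intro a b h
      have h' : ((List.ofFn a.1 : List (Fin q)) : Multiset (Fin q)) = (List.ofFn b.1 : List (Fin q)) :=
        congrArg Subtype.val h
      have hperm := Multiset.coe_eq_coe.mp h'
      have := hperm.eq_of_sortedLE a.2.sortedLE_ofFn b.2.sortedLE_ofFn
      exact Subtype.ext (List.ofFn_injective this)
    calc Nat.card ↥MonoS ≤ Nat.card (Sym (Fin q) n) := Nat.card_le_card_of_injective _ hinj
      _ = C := by
        rw [Nat.card_eq_fintype_card, Sym.card_sym_eq_choose, Fintype.card_fin]
  -- constant tuples over Fin q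
  set CstQ : Set (Fin n → Fin q) := Set.range (fun c : Fin q => Function.const (Fin n) c) with hCstQ
  have hCstQcard : CstQ.ncard = q := by
    rw [hCstQ, ← Nat.card_coe_set_eq,
      Nat.card_range_of_injective (fun a b h => congrFun h j0), Nat.card_eq_fintype_card,
      Fintype.card_fin]
  have hsubQ : CstQ ⊆ MonoS := by
    rintro _ ⟨c, rfl⟩
    exact monotone_const
  have hqC : q ≤ C := by
    calc q = CstQ.ncard := hCstQcard.symm
      _ ≤ MonoS.ncard := Set.ncard_le_ncard hsubQ (Set.toFinite _)
      _ ≤ C := hMono_le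
  -- nonconstant monotone tuples
  set NCM : Set (Fin n → Fin q) := MonoS \ CstQ with hNCM
  have hNCMcard : NCM.ncard ≤ C - q := by
    rw [hNCM, Set.ncard_diff hsubQ (Set.toFinite _), hCstQcard]
    omega
  -- product set surjecting onto T \ Cst
  set D : Set (F × (Fin n → Fin q)) := ({(0:F)}ᶜ : Set F) ×ˢ NCM with hD
  have hDcard : Nat.card ↥D = (q - 1) * NCM.ncard := by
    rw [hD, Nat.card_congr (Equiv.Set.prod _ _), Nat.card_prod]
    rw [Nat.card_coe_set_eq, Set.compl_eq_univ_diff,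
      Set.ncard_diff (Set.subset_univ _) (Set.toFinite _), Set.ncard_univ,
      Nat.card_eq_fintype_card, hq, Set.ncard_singleton, Nat.card_coe_set_eq]
  -- surjection
  have hsurj : ∃ g : ↥D → ↥(T \ Cst), Function.Surjective g := by
    have hmem : ∀ p : ↥D, (p.1.1 • fun j => i (p.1.2 j)) ∈ T \ Cst := by
      rintro ⟨⟨t, v⟩, hp⟩
      obtain ⟨ht, hvM, hvC⟩ : t ∈ ({(0:F)}ᶜ : Set F) ∧ v ∈ MonoS ∧ v ∉ CstQ := by
        have := (Set.mem_prod.mp hp)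
        exact ⟨this.1, this.2.1, this.2.2⟩
      have ht0 : t ≠ 0 := ht
      obtain ⟨k, hk⟩ : ∃ k, v k ≠ v j0 := by
        by_contra h
        push_neg at h
        exact hvC ⟨v j0, funext fun k => (h k).symm⟩
      have hik : i (v k) ≠ i (v j0) := fun h => hk (hi h)
      constructor
      · refine ⟨v, hvM, ?_, t, rfl⟩
        intro h0
        have h1 := congrFun h0 k
        have h2 := congrFun h0 j0
        simp only [Pi.zero_apply] at h1 h2
        exact hik (h1.trans h2.symm)
      · rintro ⟨c, hc⟩
        have h1 := congrFun hc k
        have h2 := congrFun hc j0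
        simp only [Function.const_apply, Pi.smul_apply, smul_eq_mul] at h1 h2
        exact hik (mul_left_cancel₀ ht0 (h1.symm.trans h2))
    refine ⟨fun p => ⟨_, hmem p⟩, ?_⟩
    rintro ⟨x, hxT, hxC⟩
    obtain ⟨v, hv, hvne, t, rfl⟩ := hxT
    have ht0 : t ≠ 0 := by
      rintro rfl
      exact hxC ⟨0, by ext j; simp⟩
    have hvC : v ∉ CstQ := by
      rintro ⟨c, rfl⟩
      exact hxC ⟨t * i c, by ext j; simp⟩
    refine ⟨⟨(t, v), Set.mem_prod.mpr ⟨ht0, hv, hvC⟩⟩, rfl⟩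
  obtain ⟨g, hg⟩ := hsurj
  have hA : (T \ Cst).ncard ≤ (q - 1) * (C - q) := by
    calc (T \ Cst).ncard = Nat.card ↥(T \ Cst) := (Nat.card_coe_set_eq _).symm
      _ ≤ Nat.card ↥D := Nat.card_le_card_of_surjective g hg
      _ = (q - 1) * NCM.ncard := hDcard
      _ ≤ (q - 1) * (C - q) := Nat.mul_le_mul_left _ hNCMcard
  have hTle : Nat.card ↥T ≤ (q - 1) * (C - q) + q := by
    calc Nat.card ↥T = T.ncard := Nat.card_coe_set_eq _
      _ ≤ ((T \ Cst) ∪ Cst).ncard :=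
        Set.ncard_le_ncard (fun x hx => by
          by_cases h : x ∈ Cst
          · exact Or.inr h
          · exact Or.inl ⟨hx, h⟩) (Set.toFinite _)
      _ ≤ (T \ Cst).ncard + Cst.ncard := Set.ncard_union_le _ _
      _ ≤ (q - 1) * (C - q) + q := by rw [hB]; exact Nat.add_le_add_right hA q
  have harith : (q - 1) * (C - q) + q = (q - 1) * (C - (q - 1)) + 1 := by
    have h1 : C - (q - 1) = (C - q) + 1 := by omega
    rw [h1, Nat.mul_add, Nat.mul_one]
    omega
  omega
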